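/- arXiv:2101.07588 — 2 statements merged into one kernel-verified Lean document; each statement's English description precedes it below -/
import Mathlib

section
/- The Gaussian measure γ is locally doubling on admissible cubes: for every a > 0 there exists C = C(a,d) ≥ 1 such that γ(2Q) ≤ C·γ(Q) for all cubes Q ∈ 𝒬_a, where 2Q is the cube with the same center and doubled side length. -/
open MeasureTheory ENNReal Set

noncomputable section

abbrev E (d : ℕ) := EuclideanSpace ℝ (Fin d)

def gaussianM (d : ℕ) : Measure (E d) :=
  volume.withDensity fun x => ENNReal.ofReal (Real.pi ^ (-(d : ℝ)/2) * Real.exp (-‖x‖^2))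

def cube (d : ℕ) (c : E d) (l : ℝ) : Set (E d) := {x | ∀ i, |x i - c i| ≤ l / 2}

def mfun {d : ℕ} (x : E d) : ℝ := if ‖x‖ ≤ 1 then 1 else 1 / ‖x‖

def adm (d : ℕ) (a : ℝ) (c : E d) (l : ℝ) : Prop := 0 < l ∧ l ≤ a * mfun c

lemma cube_eq (d : ℕ) (c : E d) (l : ℝ) :
    cube d c l = ((MeasurableEquiv.toLp 2 (Fin d → ℝ)).symm) ⁻¹'
      (univ.pi fun i => Icc (c i - l/2) (c i + l/2)) := by
  have key : ∀ (y : E d) (i : Fin d), ((MeasurableEquiv.toLp 2 (Fin d → ℝ)).symm) y i = y i :=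
    fun _ _ => rfl
  ext x
  simp only [cube, mem_setOf_eq, mem_preimage, mem_pi, mem_univ, forall_true_left, mem_Icc,
    key, abs_le]
  constructor
  · intro h i; have := h i; constructor <;> linarith [this.1, this.2]
  · intro h i; have := h i; constructor <;> linarith [this.1, this.2]

lemma measurableSet_cube (d : ℕ) (c : E d) (l : ℝ) : MeasurableSet (cube d c l) := by
  rw [cube_eq]
  exact ((MeasurableEquiv.toLp 2 (Fin d → ℝ)).symm).measurable
    (MeasurableSet.univ_pi fun i => measurableSet_Icc)

lemma volume_cube (d : ℕ) (c : E d) (l : ℝ) :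
    volume (cube d c l) = ENNReal.ofReal l ^ d := by
  rw [cube_eq,
    (EuclideanSpace.volume_preserving_symm_measurableEquiv_toLp (Fin d)).measure_preimage
      (MeasurableSet.univ_pi fun i => measurableSet_Icc).nullMeasurableSet,
    volume_pi_pi]
  calc ∏ i : Fin d, volume (Icc (c i - l/2) (c i + l/2))
      = ∏ _i : Fin d, ENNReal.ofReal l := Finset.prod_congr rfl fun i _ => by
        rw [Real.volume_Icc]; ring_nf
    _ = ENNReal.ofReal l ^ d := by simp

lemma norm_sub_le_of_mem_cube {d : ℕ} {c x : E d} {r : ℝ} (hr : 0 ≤ r)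
    (h : ∀ i, |x i - c i| ≤ r) : ‖x - c‖ ≤ Real.sqrt d * r := by
  rw [EuclideanSpace.norm_eq]
  have h1 : ∑ i : Fin d, ‖(x - c) i‖ ^ 2 ≤ ∑ _i : Fin d, r ^ 2 := by
    apply Finset.sum_le_sum
    intro i _
    have : (x - c) i = x i - c i := rfl
    rw [this, Real.norm_eq_abs]
    exact pow_le_pow_left₀ (abs_nonneg _) (h i) 2
  calc Real.sqrt (∑ i : Fin d, ‖(x - c) i‖ ^ 2) ≤ Real.sqrt (∑ _i : Fin d, r ^ 2) :=
        Real.sqrt_le_sqrt h1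
    _ = Real.sqrt d * r := by
        rw [Finset.sum_const, Finset.card_fin, nsmul_eq_mul, Real.sqrt_mul (by positivity),
          Real.sqrt_sq hr]

/-- The Gaussian measure is locally doubling on admissible cubes: for each `a > 0` there is
`C = C(a,d) ≥ 1` with `γ(2Q) ≤ C γ(Q)` for all `Q ∈ 𝒬_a`. -/
theorem gaussian_locally_doubling (d : ℕ) (a : ℝ) (ha : 0 < a) :
    ∃ C : ℝ, 1 ≤ C ∧ ∀ (c : E d) (l : ℝ), adm d a c l →
      gaussianM d (cube d c (2 * l)) ≤ ENNReal.ofReal C * gaussianM d (cube d c l) := by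
  set A : ℝ := 2 * Real.sqrt d * a with hAdef
  have hA0 : 0 ≤ A := by positivity
  set C : ℝ := 2 ^ d * Real.exp (2 * A + d * a ^ 2) with hCdef
  have hC0 : 0 ≤ C := by positivity
  refine ⟨C, ?_, ?_⟩
  · have h1 : (1:ℝ) ≤ 2 ^ d := one_le_pow₀ (by norm_num)
    have h2 : (1:ℝ) ≤ Real.exp (2 * A + d * a ^ 2) := Real.one_le_exp (by positivity)
    nlinarith
  intro c l hadm
  obtain ⟨hl0, hl2⟩ := hadm
  have hm1 : mfun c ≤ 1 := by
    unfold mfun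
    split_ifs with h
    · exact le_refl 1
    · push_neg at h
      rw [div_le_one (by linarith)]; linarith
  have hla : l ≤ a := by nlinarith
  have hcl : ‖c‖ * l ≤ a := by
    unfold mfun at hl2
    split_ifs at hl2 with h
    · nlinarith [norm_nonneg c]
    · push_neg at h
      have hc0 : (0:ℝ) < ‖c‖ := by linarith
      rw [mul_one_div] at hl2
      calc ‖c‖ * l ≤ ‖c‖ * (a / ‖c‖) := by
            exact mul_le_mul_of_nonneg_left hl2 hc0.le
        _ = a := by field_simp
  -- pointwise exponent bounds
  have key_up : ∀ x ∈ cube d c (2 * l), -‖x‖ ^ 2 ≤ A - ‖c‖ ^ 2 := by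
    intro x hx
    have hxc : ‖x - c‖ ≤ Real.sqrt d * l :=
      norm_sub_le_of_mem_cube hl0.le fun i => by have := hx i; linarith
    have hexp : ‖x‖ ^ 2 = ‖c‖ ^ 2 + 2 * inner ℝ c (x - c) + ‖x - c‖ ^ 2 := by
      have := norm_add_sq_real c (x - c)
      simpa using this
    have hinner := abs_real_inner_le_norm c (x - c)
    have p1 : ‖c‖ * ‖x - c‖ ≤ ‖c‖ * (Real.sqrt d * l) :=
      mul_le_mul_of_nonneg_left hxc (norm_nonneg c)
    have p2 : Real.sqrt d * (‖c‖ * l) ≤ Real.sqrt d * a :=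
      mul_le_mul_of_nonneg_left hcl (Real.sqrt_nonneg d)
    have hi := (abs_le.1 hinner).1
    nlinarith [sq_nonneg ‖x - c‖]
  have key_lo : ∀ x ∈ cube d c l, -(A + d * a ^ 2) - ‖c‖ ^ 2 ≤ -‖x‖ ^ 2 := by
    intro x hx
    have hxc : ‖x - c‖ ≤ Real.sqrt d * l := by
      refine norm_sub_le_of_mem_cube hl0.le fun i => ?_
      have := hx i; linarith
    have hexp : ‖x‖ ^ 2 = ‖c‖ ^ 2 + 2 * inner ℝ c (x - c) + ‖x - c‖ ^ 2 := by
      have := norm_add_sq_real c (x - c)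
      simpa using this
    have hinner := abs_real_inner_le_norm c (x - c)
    have p1 : ‖c‖ * ‖x - c‖ ≤ ‖c‖ * (Real.sqrt d * l) :=
      mul_le_mul_of_nonneg_left hxc (norm_nonneg c)
    have p2 : Real.sqrt d * (‖c‖ * l) ≤ Real.sqrt d * a :=
      mul_le_mul_of_nonneg_left hcl (Real.sqrt_nonneg d)
    have p3 : ‖x - c‖ ^ 2 ≤ (Real.sqrt d * l) ^ 2 :=
      pow_le_pow_left₀ (norm_nonneg _) hxc 2
    have p4 : Real.sqrt d ^ 2 = (d : ℝ) := Real.sq_sqrt (by positivity)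
    have p5 : l ^ 2 ≤ a ^ 2 := pow_le_pow_left₀ hl0.le hla 2
    have hi := (abs_le.1 hinner).2
    nlinarith [(Nat.cast_nonneg d : (0:ℝ) ≤ (d:ℝ))]
  set K : ℝ := Real.pi ^ (-(d : ℝ)/2) with hKdef
  have hKpos : 0 < K := Real.rpow_pos_of_pos Real.pi_pos _
  have h2Q : gaussianM d (cube d c (2 * l)) ≤
      ENNReal.ofReal (K * Real.exp (A - ‖c‖ ^ 2)) * (ENNReal.ofReal (2 * l)) ^ d := by
    rw [gaussianM, withDensity_apply _ (measurableSet_cube d c (2 * l)),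
      ← volume_cube d c (2 * l), ← setLIntegral_const]
    refine setLIntegral_mono' (measurableSet_cube d c (2 * l)) fun x hx => ?_
    exact ENNReal.ofReal_le_ofReal
      (mul_le_mul_of_nonneg_left (Real.exp_le_exp.2 (key_up x hx)) hKpos.le)
  have hQ : ENNReal.ofReal (K * Real.exp (-(A + d * a ^ 2) - ‖c‖ ^ 2)) *
      (ENNReal.ofReal l) ^ d ≤ gaussianM d (cube d c l) := by
    rw [gaussianM, withDensity_apply _ (measurableSet_cube d c l),
      ← volume_cube d c l, ← setLIntegral_const]
    refine setLIntegral_mono' (measurableSet_cube d c l) fun x hx => ?_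
    exact ENNReal.ofReal_le_ofReal
      (mul_le_mul_of_nonneg_left (Real.exp_le_exp.2 (key_lo x hx)) hKpos.le)
  have hexpmul : Real.exp (2 * A + d * a ^ 2) * Real.exp (-(A + d * a ^ 2) - ‖c‖ ^ 2)
      = Real.exp (A - ‖c‖ ^ 2) := by
    rw [← Real.exp_add]; congr 1; ring
  have hreal : K * Real.exp (A - ‖c‖ ^ 2) * 2 ^ d
      = C * (K * Real.exp (-(A + d * a ^ 2) - ‖c‖ ^ 2)) := by
    rw [hCdef]
    linear_combination (-(2 ^ d * K)) * hexpmul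
  calc gaussianM d (cube d c (2 * l))
      ≤ ENNReal.ofReal (K * Real.exp (A - ‖c‖ ^ 2)) * (ENNReal.ofReal (2 * l)) ^ d := h2Q
    _ = ENNReal.ofReal (C * (K * Real.exp (-(A + d * a ^ 2) - ‖c‖ ^ 2))) *
        (ENNReal.ofReal l) ^ d := by
        rw [ENNReal.ofReal_mul (by norm_num : (0:ℝ) ≤ 2), mul_pow, ← mul_assoc,
          ← ENNReal.ofReal_pow (by norm_num : (0:ℝ) ≤ 2),
          ← ENNReal.ofReal_mul (by positivity), hreal]
    _ ≤ ENNReal.ofReal C * gaussianM d (cube d c l) := by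
        rw [ENNReal.ofReal_mul hC0, mul_assoc]
        exact mul_le_mul_right hQ _

end
end

section
/- Let u'(x) = u(x) e^{−(1−α̇)|x|²} and v'(x) = v(x) e^{−(1−α̇)|x|²}. Then (u,v) ∈ A^a_{p,q,α} if and only if (u',v') ∈ 𝒜^a_{p,q,α}, i.e., the Gaussian-measure Muckenhoupt condition with respect to γ is equivalent to the corresponding radialized condition with respect to the measure dγ'(x) = e^{−α̇|x|²} dx. -/
open MeasureTheory ENNReal Set

noncomputable section

/-- The radialized measure `dγ'(x) = e^{-(α/d)|x|²} dx`. -/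
def gammaRad (d : ℕ) (α : ℝ) : Measure (E d) :=
  volume.withDensity fun x => ENNReal.ofReal (Real.exp (-(α/d) * ‖x‖^2))

def pconj (p : ℝ) : ℝ := p / (p - 1)

/-- The Gaussian two-weight Muckenhoupt constant `[u,v]_{A^a_{p,q,α}}`. -/
def Aconst (d : ℕ) (a p q α : ℝ) (u v : E d → ℝ≥0∞) : ℝ≥0∞ :=
  ⨆ (c : E d) (l : ℝ) (_ : adm d a c l),
    gaussianM d (cube d c l) ^ (α/d + 1/q - 1/p) *
    ((gaussianM d (cube d c l))⁻¹ * ∫⁻ x in cube d c l, u x ∂(gaussianM d)) ^ (1/q) *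
    ((gaussianM d (cube d c l))⁻¹ *
        ∫⁻ x in cube d c l, v x ^ (1 - pconj p) ∂(gaussianM d)) ^ (1/(pconj p))

/-- The radialized constant `[u,v]_{𝒜^a_{p,q,α}}` with respect to `γ'`. -/
def Arad (d : ℕ) (a p q α : ℝ) (u v : E d → ℝ≥0∞) : ℝ≥0∞ :=
  ⨆ (c : E d) (l : ℝ) (_ : adm d a c l),
    ENNReal.ofReal (l ^ (α - d)) *
    (∫⁻ x in cube d c l, u x ∂(gammaRad d α)) ^ (1/q) *
    (∫⁻ x in cube d c l, v x ^ (1 - pconj p) ∂(gammaRad d α)) ^ (1/(pconj p))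

namespace AIA

lemma aux_exp_rpow (t r : ℝ) :
    (ENNReal.ofReal (Real.exp t)) ^ r = ENNReal.ofReal (Real.exp (t * r)) := by
  rw [ENNReal.ofReal_rpow_of_pos (Real.exp_pos t), Real.exp_mul]

lemma exp_ne_top (t : ℝ) : ENNReal.ofReal (Real.exp t) ≠ ⊤ := ENNReal.ofReal_ne_top

lemma exp_ne_zero (t : ℝ) : ENNReal.ofReal (Real.exp t) ≠ 0 := by
  simp [ENNReal.ofReal_eq_zero, not_le, Real.exp_pos]

lemma exp_mul_exp (s t : ℝ) :
    ENNReal.ofReal (Real.exp s) * ENNReal.ofReal (Real.exp t)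
      = ENNReal.ofReal (Real.exp (s + t)) := by
  rw [Real.exp_add, ENNReal.ofReal_mul (Real.exp_pos s).le]

lemma exp_inv (t : ℝ) : (ENNReal.ofReal (Real.exp t))⁻¹ = ENNReal.ofReal (Real.exp (-t)) := by
  rw [← ENNReal.rpow_neg_one, aux_exp_rpow]
  norm_num

lemma mul_rpow (x : ℝ≥0∞) (hx0 : x ≠ 0) (hxt : x ≠ ⊤) (y : ℝ≥0∞) (r : ℝ) :
    (x * y) ^ r = x ^ r * y ^ r := by
  rcases eq_or_ne y 0 with rfl | hy
  · rcases lt_trichotomy r 0 with h | rfl | h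
    · rw [mul_zero, ENNReal.zero_rpow_of_neg h, ENNReal.mul_top]
      simp only [ne_eq, ENNReal.rpow_eq_zero_iff, not_or, not_and]
      exact ⟨fun h' => absurd h' hx0, fun h' => absurd h' hxt⟩
    · simp
    · rw [mul_zero, ENNReal.zero_rpow_of_pos h, mul_zero]
  · exact ENNReal.mul_rpow_of_ne_zero hx0 hy r

lemma rpow_anti {x y : ℝ≥0∞} (h : x ≤ y) {r : ℝ} (hr : r ≤ 0) : y ^ r ≤ x ^ r := by
  have h2 : x ^ (-r) ≤ y ^ (-r) := ENNReal.rpow_le_rpow h (neg_nonneg.2 hr)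
  have h3 : (y ^ (-r))⁻¹ ≤ (x ^ (-r))⁻¹ := ENNReal.inv_le_inv.2 h2
  rwa [ENNReal.rpow_neg y, ENNReal.rpow_neg x, inv_inv, inv_inv] at h3

lemma cube_eq (d : ℕ) (c : E d) (l : ℝ) :
    cube d c l = ((MeasurableEquiv.toLp 2 (Fin d → ℝ)).symm) ⁻¹'
      (Set.univ.pi fun i => Set.Icc (c i - l/2) (c i + l/2)) := by
  ext x
  simp only [cube, Set.mem_setOf_eq, Set.mem_preimage, Set.mem_pi, Set.mem_univ,
    forall_true_left, Set.mem_Icc]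
  refine forall_congr' fun i => ?_
  have hxi : ((MeasurableEquiv.toLp 2 (Fin d → ℝ)).symm) x i = x i := rfl
  rw [hxi, abs_le]
  constructor <;> rintro ⟨h1, h2⟩ <;> constructor <;> linarith

lemma measurableSet_cube (d : ℕ) (c : E d) (l : ℝ) : MeasurableSet (cube d c l) := by
  rw [cube_eq]
  exact ((MeasurableEquiv.toLp 2 (Fin d → ℝ)).symm).measurable
    (MeasurableSet.univ_pi fun i => measurableSet_Icc)

lemma volume_cube (d : ℕ) (c : E d) (l : ℝ) :
    volume (cube d c l) = ENNReal.ofReal l ^ d := by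
  rw [cube_eq, (EuclideanSpace.volume_preserving_symm_measurableEquiv_toLp (Fin d)).measure_preimage
    (MeasurableSet.univ_pi fun i => measurableSet_Icc).nullMeasurableSet]
  rw [volume_pi_pi]
  simp only [Real.volume_Icc]
  have hh : ∀ i : Fin d, c i + l/2 - (c i - l/2) = l := fun i => by ring
  simp [hh]




lemma mfun_pos {d : ℕ} (c : E d) : 0 < mfun c := by
  unfold mfun; split_ifs with h
  · norm_num
  · have h1 : (1:ℝ) < ‖c‖ := not_le.1 h
    positivity

lemma mfun_le_one {d : ℕ} (c : E d) : mfun c ≤ 1 := by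
  unfold mfun; split_ifs with h
  · exact le_refl 1
  · have h1 : (1:ℝ) < ‖c‖ := not_le.1 h
    rw [div_le_one (by linarith)]
    linarith

lemma mfun_mul_le_one {d : ℕ} (c : E d) : mfun c * ‖c‖ ≤ 1 := by
  unfold mfun; split_ifs with h
  · simpa using h
  · have h1 : (1:ℝ) < ‖c‖ := not_le.1 h
    rw [div_mul_cancel₀]
    linarith

lemma dist_bound {d : ℕ} {l : ℝ} {c x : E d} (hl : 0 ≤ l) (hx : x ∈ cube d c l) :
    ‖x - c‖ ≤ Real.sqrt d * (l / 2) := by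
  have h1 : ‖x - c‖ = Real.sqrt (∑ i, (x i - c i)^2) := by
    rw [EuclideanSpace.norm_eq]
    congr 1
    refine Finset.sum_congr rfl fun i _ => ?_
    have : (x - c) i = x i - c i := rfl
    rw [this, Real.norm_eq_abs, sq_abs]
  rw [h1]
  have h2 : (∑ i, (x i - c i)^2) ≤ (d : ℝ) * (l/2)^2 := by
    calc (∑ i, (x i - c i)^2) ≤ ∑ _i : Fin d, (l/2)^2 := by
          refine Finset.sum_le_sum fun i _ => ?_
          have := hx i
          nlinarith [abs_nonneg (x i - c i), sq_abs (x i - c i)]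
      _ = (d : ℝ) * (l/2)^2 := by simp [Finset.sum_const, mul_comm]
  calc Real.sqrt (∑ i, (x i - c i)^2) ≤ Real.sqrt ((d:ℝ) * (l/2)^2) := Real.sqrt_le_sqrt h2
    _ = Real.sqrt d * (l/2) := by
        rw [Real.sqrt_mul (Nat.cast_nonneg d), Real.sqrt_sq (by linarith)]

lemma normsq_bound {d : ℕ} {a l : ℝ} {c x : E d} (ha : 0 < a) (h : adm d a c l)
    (hx : x ∈ cube d c l) :
    |‖x‖^2 - ‖c‖^2| ≤ a * Real.sqrt d + a^2 * d := by
  obtain ⟨hl, hla⟩ := h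
  set D := ‖x - c‖ with hD
  have hD0 : 0 ≤ D := norm_nonneg _
  have hsd : 0 ≤ Real.sqrt d := Real.sqrt_nonneg _
  have hDle : D ≤ Real.sqrt d * (a * mfun c) / 2 := by
    calc D ≤ Real.sqrt d * (l/2) := dist_bound hl.le hx
      _ ≤ Real.sqrt d * (a * mfun c) / 2 := by
          rw [mul_div_assoc]
          exact mul_le_mul_of_nonneg_left (by linarith) hsd
  have hm0 := mfun_pos c
  have hm1 := mfun_le_one c
  have hmc := mfun_mul_le_one c
  have h1 : D * ‖c‖ ≤ Real.sqrt d * a / 2 := by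
    calc D * ‖c‖ ≤ (Real.sqrt d * (a * mfun c) / 2) * ‖c‖ :=
          mul_le_mul_of_nonneg_right hDle (norm_nonneg _)
      _ = (Real.sqrt d * a / 2) * (mfun c * ‖c‖) := by ring
      _ ≤ Real.sqrt d * a / 2 := by
          nlinarith [mul_nonneg (mul_nonneg hsd ha.le) hm0.le]
  have hd0' : (0:ℝ) ≤ d := Nat.cast_nonneg d
  have h2 : D^2 ≤ (d:ℝ) * a^2 / 4 := by
    have hsq : D^2 ≤ (Real.sqrt d * (a * mfun c) / 2)^2 := by nlinarith
    have hd2 : Real.sqrt d ^ 2 = (d:ℝ) := Real.sq_sqrt (Nat.cast_nonneg d)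
    have hm2 : mfun c ^ 2 ≤ 1 := by nlinarith
    have key : (d:ℝ) * a^2 * (mfun c ^ 2) ≤ (d:ℝ) * a^2 * 1 :=
      mul_le_mul_of_nonneg_left hm2 (mul_nonneg hd0' (sq_nonneg a))
    have hsq2 : (Real.sqrt d * (a * mfun c) / 2)^2 = (d:ℝ) * a^2 * mfun c^2 / 4 := by
      rw [show (Real.sqrt d * (a * mfun c) / 2)^2
          = Real.sqrt d ^ 2 * (a^2 * mfun c^2) / 4 by ring, hd2]
      ring
    rw [hsq2] at hsq
    linarith
  have htri1 : ‖x‖ ≤ ‖c‖ + D := by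
    calc ‖x‖ = ‖c + (x - c)‖ := by congr 1; abel
      _ ≤ ‖c‖ + D := norm_add_le _ _
  have htri2 : ‖c‖ ≤ ‖x‖ + D := by
    calc ‖c‖ = ‖x + (c - x)‖ := by congr 1; abel
      _ ≤ ‖x‖ + ‖c - x‖ := norm_add_le _ _
      _ = ‖x‖ + D := by rw [norm_sub_rev]
  have hd0 : (0:ℝ) ≤ d := Nat.cast_nonneg d
  rw [abs_le]
  constructor
  · nlinarith [norm_nonneg x, norm_nonneg c]
  · nlinarith [norm_nonneg x, norm_nonneg c]



lemma meas_exp (d : ℕ) (r : ℝ) :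
    Measurable fun x : E d => ENNReal.ofReal (Real.exp (r * ‖x‖^2)) :=
  (Real.measurable_exp.comp ((measurable_norm.pow_const 2).const_mul r)).ennreal_ofReal

lemma J_le {d : ℕ} {a : ℝ} (ha : 0 < a) {c : E d} {l : ℝ} (h : adm d a c l)
    (f : E d → ℝ≥0∞) (s t : ℝ) :
    (∫⁻ x in cube d c l, f x * ENNReal.ofReal (Real.exp (s * ‖x‖^2))) ≤
      ENNReal.ofReal (Real.exp (|s - t| * (a * Real.sqrt d + a^2*d) + (s - t) * ‖c‖^2)) *
        ∫⁻ x in cube d c l, f x * ENNReal.ofReal (Real.exp (t * ‖x‖^2)) := by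
  rw [← lintegral_const_mul' _ _ ENNReal.ofReal_ne_top]
  refine setLIntegral_mono' (measurableSet_cube ..) fun x hx => ?_
  rw [← mul_assoc, mul_comm (ENNReal.ofReal _) (f x), mul_assoc, exp_mul_exp]
  refine mul_le_mul_right (ENNReal.ofReal_le_ofReal (Real.exp_le_exp.2 ?_)) _
  have hb := normsq_bound ha h hx
  have key : (s - t) * (‖x‖^2 - ‖c‖^2) ≤ |s - t| * (a * Real.sqrt d + a^2*d) := by
    calc (s-t) * (‖x‖^2 - ‖c‖^2) ≤ |(s-t) * (‖x‖^2 - ‖c‖^2)| := le_abs_self _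
      _ = |s-t| * |‖x‖^2-‖c‖^2| := abs_mul _ _
      _ ≤ |s-t| * (a * Real.sqrt d + a^2*d) := mul_le_mul_of_nonneg_left hb (abs_nonneg _)
  nlinarith [key]

lemma gauss_density_meas (d : ℕ) :
    Measurable fun x : E d =>
      ENNReal.ofReal (Real.pi ^ (-(d : ℝ)/2) * Real.exp (-‖x‖^2)) :=
  ((Real.measurable_exp.comp (measurable_norm.pow_const 2).neg).const_mul _).ennreal_ofReal

lemma gauss_eq (d : ℕ) (c : E d) (l : ℝ) :
    gaussianM d (cube d c l) =
      ENNReal.ofReal (Real.pi ^ (-(d:ℝ)/2)) *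
        ∫⁻ x in cube d c l, (1:ℝ≥0∞) * ENNReal.ofReal (Real.exp ((-1) * ‖x‖^2)) := by
  rw [gaussianM, withDensity_apply _ (measurableSet_cube ..),
    ← lintegral_const_mul' _ _ ENNReal.ofReal_ne_top]
  refine lintegral_congr fun x => ?_
  rw [one_mul, ← ENNReal.ofReal_mul (by positivity)]
  norm_num

lemma setA_eq (d : ℕ) (u : E d → ℝ≥0∞) (hu : Measurable u) (c : E d) (l : ℝ) :
    (∫⁻ x in cube d c l, u x ∂(gaussianM d)) =
      ENNReal.ofReal (Real.pi ^ (-(d:ℝ)/2)) *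
        ∫⁻ x in cube d c l, u x * ENNReal.ofReal (Real.exp ((-1) * ‖x‖^2)) := by
  rw [gaussianM, setLIntegral_withDensity_eq_setLIntegral_mul _ (gauss_density_meas d) hu
    (measurableSet_cube ..), ← lintegral_const_mul' _ _ ENNReal.ofReal_ne_top]
  refine lintegral_congr fun x => ?_
  simp only [Pi.mul_apply]
  rw [show (-1 : ℝ) * ‖x‖^2 = -‖x‖^2 by ring,
    ENNReal.ofReal_mul (by positivity : (0:ℝ) ≤ Real.pi ^ (-(d:ℝ)/2))]
  ring

lemma setA'_eq (d : ℕ) (α : ℝ) (u : E d → ℝ≥0∞) (hu : Measurable u) (c : E d) (l : ℝ) :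
    (∫⁻ x in cube d c l, u x * ENNReal.ofReal (Real.exp (-(1 - α/d) * ‖x‖^2)) ∂(gammaRad d α)) =
      ∫⁻ x in cube d c l, u x * ENNReal.ofReal (Real.exp ((-1) * ‖x‖^2)) := by
  rw [gammaRad, setLIntegral_withDensity_eq_setLIntegral_mul _ (meas_exp d _)
    (g := fun x => u x * ENNReal.ofReal (Real.exp (-(1 - α/d) * ‖x‖^2)))
    (hu.mul (meas_exp d _)) (measurableSet_cube ..)]
  refine lintegral_congr fun x => ?_
  simp only [Pi.mul_apply]
  rw [← mul_assoc, mul_comm (ENNReal.ofReal (Real.exp (-(α/d) * ‖x‖^2))) (u x), mul_assoc,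
    exp_mul_exp]
  congr 2
  ring




lemma meas_rpow {d : ℕ} (v : E d → ℝ≥0∞) (hv : Measurable v) (r : ℝ) :
    Measurable fun x => v x ^ r :=
  ENNReal.continuous_rpow_const.measurable.comp hv

lemma setB'_eq (d : ℕ) (p α : ℝ) (v : E d → ℝ≥0∞) (hv : Measurable v) (c : E d) (l : ℝ) :
    (∫⁻ x in cube d c l,
        (v x * ENNReal.ofReal (Real.exp (-(1 - α/d) * ‖x‖^2))) ^ (1 - pconj p)
        ∂(gammaRad d α)) =
      ∫⁻ x in cube d c l, (v x ^ (1 - pconj p)) *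
        ENNReal.ofReal (Real.exp (((1 - α/d) * pconj p - 1) * ‖x‖^2)) := by
  rw [gammaRad, setLIntegral_withDensity_eq_setLIntegral_mul _ (meas_exp d _)
    (meas_rpow (fun x => v x * ENNReal.ofReal (Real.exp (-(1 - α/d) * ‖x‖^2))) (hv.mul (meas_exp d _)) _) (measurableSet_cube ..)]
  refine lintegral_congr fun x => ?_
  simp only [Pi.mul_apply]
  rw [mul_comm (v x) (ENNReal.ofReal (Real.exp (-(1 - α/d) * ‖x‖^2))),
    mul_rpow _ (exp_ne_zero _) ENNReal.ofReal_ne_top _ _, aux_exp_rpow,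
    ← mul_assoc, exp_mul_exp, mul_comm]
  congr 2
  ring



lemma J_le' {d : ℕ} {a : ℝ} (ha : 0 < a) {c : E d} {l : ℝ} (h : adm d a c l)
    (f : E d → ℝ≥0∞) (s t r : ℝ)
    (hr : |s - t| * (a * Real.sqrt d + a^2*d) + (s - t) * ‖c‖^2 = r) :
    (∫⁻ x in cube d c l, f x * ENNReal.ofReal (Real.exp (s * ‖x‖^2))) ≤
      ENNReal.ofReal (Real.exp r) *
        ∫⁻ x in cube d c l, f x * ENNReal.ofReal (Real.exp (t * ‖x‖^2)) := by
  rw [← hr]; exact J_le ha h f s t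

lemma rpow_ne_top' {x : ℝ≥0∞} (hx0 : x ≠ 0) (hxt : x ≠ ⊤) (r : ℝ) : x ^ r ≠ ⊤ := by
  simp [ENNReal.rpow_eq_top_iff, hx0, hxt]

lemma term_comp (d : ℕ) (a p q α : ℝ) (ha : 0 < a)
    (hp : 1 < p) (hpq : p ≤ q) (hα : 0 ≤ α) (hαd : α < d)
    (u v : E d → ℝ≥0∞) (hu : Measurable u) (hv : Measurable v) :
    ∃ C : ℝ≥0∞, C ≠ ⊤ ∧ ∀ (c : E d) (l : ℝ), adm d a c l →
      (gaussianM d (cube d c l) ^ (α/d + 1/q - 1/p) *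
        ((gaussianM d (cube d c l))⁻¹ * ∫⁻ x in cube d c l, u x ∂(gaussianM d)) ^ (1/q) *
        ((gaussianM d (cube d c l))⁻¹ *
          ∫⁻ x in cube d c l, v x ^ (1 - pconj p) ∂(gaussianM d)) ^ (1/(pconj p)) ≤
        C * (ENNReal.ofReal (l ^ (α - d)) *
          (∫⁻ x in cube d c l,
            u x * ENNReal.ofReal (Real.exp (-(1 - α/d) * ‖x‖^2)) ∂(gammaRad d α)) ^ (1/q) *
          (∫⁻ x in cube d c l,
            (v x * ENNReal.ofReal (Real.exp (-(1 - α/d) * ‖x‖^2))) ^ (1 - pconj p)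
            ∂(gammaRad d α)) ^ (1/(pconj p)))) ∧
      (ENNReal.ofReal (l ^ (α - d)) *
          (∫⁻ x in cube d c l,
            u x * ENNReal.ofReal (Real.exp (-(1 - α/d) * ‖x‖^2)) ∂(gammaRad d α)) ^ (1/q) *
          (∫⁻ x in cube d c l,
            (v x * ENNReal.ofReal (Real.exp (-(1 - α/d) * ‖x‖^2))) ^ (1 - pconj p)
            ∂(gammaRad d α)) ^ (1/(pconj p)) ≤
        C * (gaussianM d (cube d c l) ^ (α/d + 1/q - 1/p) *
          ((gaussianM d (cube d c l))⁻¹ * ∫⁻ x in cube d c l, u x ∂(gaussianM d)) ^ (1/q) *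
          ((gaussianM d (cube d c l))⁻¹ *
            ∫⁻ x in cube d c l, v x ^ (1 - pconj p) ∂(gaussianM d)) ^ (1/(pconj p)))) := by
  have hd : (0:ℝ) < d := lt_of_le_of_lt hα hαd
  set K : ℝ := a * Real.sqrt d + a^2 * d with hK
  set pc : ℝ := pconj p with hpcdef
  have hpc0 : 0 < pc := by
    have h1 : 0 < p - 1 := by linarith
    rw [hpcdef, pconj]; positivity
  have hq0 : 0 < q := lt_of_lt_of_le (lt_trans one_pos hp) hpq
  have hrec : 1/p + 1/pc = 1 := by
    rw [hpcdef, pconj]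
    field_simp
    ring
  have hα1 : α/d < 1 := (div_lt_one hd).2 hαd
  set s : ℝ := (1 - α/d) * pc with hsdef
  have hs0 : 0 < s := by
    apply mul_pos (by linarith) hpc0
  set e : ℝ := α/d + 1/q - 1/p with hedef
  set r0 : ℝ := α/d - 1 with hr0def
  have hr0 : r0 ≤ 0 := by rw [hr0def]; linarith
  set cπ : ℝ≥0∞ := ENNReal.ofReal (Real.pi ^ (-(d:ℝ)/2)) with hcπdef
  have hcπ0 : cπ ≠ 0 := by
    rw [hcπdef]
    simp only [ne_eq, ENNReal.ofReal_eq_zero, not_le]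
    positivity
  have hcπt : cπ ≠ ⊤ := ENNReal.ofReal_ne_top
  set c₂ : ℝ≥0∞ := ENNReal.ofReal (Real.exp (K * (1 - α/d))) with hc₂def
  set c₃ : ℝ≥0∞ := ENNReal.ofReal (Real.exp (s * K / pc)) with hc₃def
  refine ⟨cπ ^ e * c₂ * c₃ + c₂ * c₃ * cπ ^ (-e), ?_, ?_⟩
  · exact ENNReal.add_ne_top.2
      ⟨ENNReal.mul_ne_top (ENNReal.mul_ne_top (rpow_ne_top' hcπ0 hcπt e) ENNReal.ofReal_ne_top)
        ENNReal.ofReal_ne_top,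
       ENNReal.mul_ne_top (ENNReal.mul_ne_top ENNReal.ofReal_ne_top ENNReal.ofReal_ne_top)
        (rpow_ne_top' hcπ0 hcπt (-e))⟩
  intro c l hcl
  have hl : 0 < l := hcl.1
  -- rewrite all integrals
  rw [gauss_eq d c l, setA_eq d u hu c l, setA_eq d _ (meas_rpow v hv (1 - pconj p)) c l,
    setA'_eq d α u hu c l, setB'_eq d p α v hv c l]
  set Ju : ℝ≥0∞ := ∫⁻ x in cube d c l, u x * ENNReal.ofReal (Real.exp ((-1) * ‖x‖^2)) with hJudef
  set Jv : ℝ≥0∞ := ∫⁻ x in cube d c l,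
    (v x ^ (1 - pconj p)) * ENNReal.ofReal (Real.exp ((-1) * ‖x‖^2)) with hJvdef
  set J1 : ℝ≥0∞ := ∫⁻ x in cube d c l,
    (1:ℝ≥0∞) * ENNReal.ofReal (Real.exp ((-1) * ‖x‖^2)) with hJ1def
  set JB : ℝ≥0∞ := ∫⁻ x in cube d c l,
    (v x ^ (1 - pconj p)) * ENNReal.ofReal (Real.exp (((1 - α/d) * pconj p - 1) * ‖x‖^2))
    with hJBdef
  set L : ℝ≥0∞ := ENNReal.ofReal (l ^ (α - d)) with hLdef
  set g1 : ℝ≥0∞ := ENNReal.ofReal (Real.exp ((1 - α/d) * ‖c‖^2)) with hg1def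
  set g1' : ℝ≥0∞ := ENNReal.ofReal (Real.exp (-((1 - α/d) * ‖c‖^2))) with hg1'def
  have hgg : g1 * g1' = 1 := by
    rw [hg1def, hg1'def, exp_mul_exp]
    simp
  -- volume facts
  have h0 : (∫⁻ x in cube d c l, (1:ℝ≥0∞) * ENNReal.ofReal (Real.exp ((0:ℝ) * ‖x‖^2)))
      = ENNReal.ofReal l ^ d := by
    simp only [zero_mul, Real.exp_zero, ENNReal.ofReal_one, mul_one, one_mul]
    rw [setLIntegral_one, volume_cube]
  have hvol0 : (ENNReal.ofReal l ^ d : ℝ≥0∞) ≠ 0 := by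
    apply pow_ne_zero
    simp only [ne_eq, ENNReal.ofReal_eq_zero, not_le]
    exact hl
  have hvolt : (ENNReal.ofReal l ^ d : ℝ≥0∞) ≠ ⊤ := by
    exact pow_ne_top ENNReal.ofReal_ne_top
  have hJ1_le : J1 ≤ ENNReal.ofReal (Real.exp (K - ‖c‖^2)) * (ENNReal.ofReal l ^ d) := by
    have h := J_le' ha hcl (fun _ => (1:ℝ≥0∞)) (-1) 0 (K - ‖c‖^2) (by
      rw [show |(-1:ℝ) - 0| = 1 by norm_num]; ring)
    rw [h0] at h
    exact h
  have hvolJ : (ENNReal.ofReal l ^ d : ℝ≥0∞)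
      ≤ ENNReal.ofReal (Real.exp (K + ‖c‖^2)) * J1 := by
    have h := J_le' ha hcl (fun _ => (1:ℝ≥0∞)) 0 (-1) (K + ‖c‖^2) (by
      rw [show |(0:ℝ) - (-1)| = 1 by norm_num]; ring)
    rw [h0] at h
    exact h
  have hJ1_0 : J1 ≠ 0 := by
    intro h
    rw [h, mul_zero] at hvolJ
    exact hvol0 (le_zero_iff.1 hvolJ)
  have hJ1_t : J1 ≠ ⊤ := by
    intro h
    rw [h] at hJ1_le
    exact (ENNReal.mul_ne_top ENNReal.ofReal_ne_top hvolt) (top_le_iff.1 hJ1_le)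
  have hlower : ENNReal.ofReal (Real.exp (-(K + ‖c‖^2))) * (ENNReal.ofReal l ^ d) ≤ J1 := by
    calc ENNReal.ofReal (Real.exp (-(K + ‖c‖^2))) * (ENNReal.ofReal l ^ d)
        ≤ ENNReal.ofReal (Real.exp (-(K + ‖c‖^2))) *
            (ENNReal.ofReal (Real.exp (K + ‖c‖^2)) * J1) := mul_le_mul_right hvolJ _
      _ = (ENNReal.ofReal (Real.exp (-(K + ‖c‖^2))) * ENNReal.ofReal (Real.exp (K + ‖c‖^2)))
            * J1 := by ring
      _ = J1 := by
          rw [exp_mul_exp, show -(K + ‖c‖^2) + (K + ‖c‖^2) = 0 by ring, Real.exp_zero,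
            ENNReal.ofReal_one, one_mul]
  -- rpow of volume
  have hL : ((ENNReal.ofReal l ^ d : ℝ≥0∞)) ^ r0 = L := by
    rw [← ENNReal.rpow_natCast (ENNReal.ofReal l) d, ← ENNReal.rpow_mul,
      show (d:ℝ) * r0 = α - d by rw [hr0def]; field_simp,
      ENNReal.ofReal_rpow_of_pos hl]
  -- (i)
  have hJr_le : J1 ^ r0 ≤ c₂ * (g1 * L) := by
    have h1 := rpow_anti hlower hr0
    rw [mul_rpow _ (exp_ne_zero _) ENNReal.ofReal_ne_top _ _, aux_exp_rpow, hL] at h1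
    calc J1 ^ r0 ≤ ENNReal.ofReal (Real.exp (-(K + ‖c‖^2) * r0)) * L := h1
      _ = c₂ * (g1 * L) := by
          rw [hc₂def, hg1def, ← mul_assoc, exp_mul_exp]
          congr 2
          rw [hr0def]; ring
  -- (ii)
  have hgL_le : g1 * L ≤ c₂ * J1 ^ r0 := by
    have h1 := rpow_anti hJ1_le hr0
    rw [mul_rpow _ (exp_ne_zero _) ENNReal.ofReal_ne_top _ _, aux_exp_rpow, hL] at h1
    have h2 : ENNReal.ofReal (Real.exp (-(K * (1 - α/d)))) * (g1 * L) ≤ J1 ^ r0 := by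
      calc ENNReal.ofReal (Real.exp (-(K * (1 - α/d)))) * (g1 * L)
          = ENNReal.ofReal (Real.exp ((K - ‖c‖^2) * r0)) * L := by
            rw [hg1def, ← mul_assoc, exp_mul_exp]
            congr 2
            rw [hr0def]; ring
        _ ≤ J1 ^ r0 := h1
    calc g1 * L = c₂ * (ENNReal.ofReal (Real.exp (-(K * (1 - α/d)))) * (g1 * L)) := by
          rw [hc₂def, ← mul_assoc, exp_mul_exp]
          simp
      _ ≤ c₂ * J1 ^ r0 := mul_le_mul_right h2 _
  -- (iii) and (iv)
  have hJB : JB ≤ ENNReal.ofReal (Real.exp (s * K + s * ‖c‖^2)) * Jv := by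
    refine J_le' ha hcl (fun x => v x ^ (1 - pconj p)) ((1 - α/d) * pconj p - 1) (-1)
      (s * K + s * ‖c‖^2) ?_
    have hs' : (1 - α/d) * pconj p - 1 - (-1) = s := by rw [hsdef, hpcdef]; ring
    rw [hs', abs_of_pos hs0, hK]
  have hJv : Jv ≤ ENNReal.ofReal (Real.exp (s * K - s * ‖c‖^2)) * JB := by
    refine J_le' ha hcl (fun x => v x ^ (1 - pconj p)) (-1) ((1 - α/d) * pconj p - 1)
      (s * K - s * ‖c‖^2) ?_
    have hs' : (-1:ℝ) - ((1 - α/d) * pconj p - 1) = -s := by rw [hsdef, hpcdef]; ring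
    rw [hs', abs_neg, abs_of_pos hs0, hK]
    ring
  have hspc : s * (1/pc) = 1 - α/d := by
    rw [hsdef]
    field_simp
  have hJB_pow : JB ^ (1/pc) ≤ c₃ * g1 * Jv ^ (1/pc) := by
    have h1 := ENNReal.rpow_le_rpow hJB (by positivity : (0:ℝ) ≤ 1/pc)
    rw [mul_rpow _ (exp_ne_zero _) ENNReal.ofReal_ne_top _ _, aux_exp_rpow] at h1
    calc JB ^ (1/pc) ≤ ENNReal.ofReal (Real.exp ((s * K + s * ‖c‖^2) * (1/pc)))
          * Jv ^ (1/pc) := h1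
      _ = c₃ * g1 * Jv ^ (1/pc) := by
          rw [hc₃def, hg1def, exp_mul_exp]
          congr 2
          have : (s * K + s * ‖c‖^2) * (1/pc) = s * K / pc + s * (1/pc) * ‖c‖^2 := by
            field_simp
            try ring
          rw [this, hspc]
  have hJv_pow : Jv ^ (1/pc) ≤ c₃ * g1' * JB ^ (1/pc) := by
    have h1 := ENNReal.rpow_le_rpow hJv (by positivity : (0:ℝ) ≤ 1/pc)
    rw [mul_rpow _ (exp_ne_zero _) ENNReal.ofReal_ne_top _ _, aux_exp_rpow] at h1
    calc Jv ^ (1/pc) ≤ ENNReal.ofReal (Real.exp ((s * K - s * ‖c‖^2) * (1/pc)))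
          * JB ^ (1/pc) := h1
      _ = c₃ * g1' * JB ^ (1/pc) := by
          rw [hc₃def, hg1'def, exp_mul_exp]
          congr 2
          have : (s * K - s * ‖c‖^2) * (1/pc) = s * K / pc + -(s * (1/pc) * ‖c‖^2) := by
            field_simp
            try ring
          rw [this, hspc]
  -- structural equality for T
  have hcan : ∀ X : ℝ≥0∞, (cπ * J1)⁻¹ * (cπ * X) = J1⁻¹ * X := by
    intro X
    rw [ENNReal.mul_inv (Or.inl hcπ0) (Or.inl hcπt)]
    calc cπ⁻¹ * J1⁻¹ * (cπ * X) = (cπ⁻¹ * cπ) * (J1⁻¹ * X) := by ring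
      _ = J1⁻¹ * X := by rw [ENNReal.inv_mul_cancel hcπ0 hcπt, one_mul]
  have hinv0 : J1⁻¹ ≠ 0 := ENNReal.inv_ne_zero.2 hJ1_t
  have hinvt : J1⁻¹ ≠ ⊤ := ENNReal.inv_ne_top.2 hJ1_0
  have hmerge : J1 ^ e * J1 ^ (-(1/q)) * J1 ^ (-(1/pc)) = J1 ^ r0 := by
    rw [← ENNReal.rpow_add _ _ hJ1_0 hJ1_t, ← ENNReal.rpow_add _ _ hJ1_0 hJ1_t]
    congr 1
    rw [hedef, hr0def]
    linarith [hrec]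
  have hinvpow : ∀ t : ℝ, (J1⁻¹) ^ t = J1 ^ (-t) := by
    intro t
    rw [ENNReal.inv_rpow, ← ENNReal.rpow_neg]
  have hT : (cπ * J1) ^ e * ((cπ * J1)⁻¹ * (cπ * Ju)) ^ (1/q) *
      ((cπ * J1)⁻¹ * (cπ * Jv)) ^ (1/pc) =
      cπ ^ e * J1 ^ r0 * Ju ^ (1/q) * Jv ^ (1/pc) := by
    rw [hcan Ju, hcan Jv, mul_rpow cπ hcπ0 hcπt J1 e,
      mul_rpow J1⁻¹ hinv0 hinvt Ju (1/q), mul_rpow J1⁻¹ hinv0 hinvt Jv (1/pc),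
      hinvpow (1/q), hinvpow (1/pc)]
    calc cπ ^ e * J1 ^ e * (J1 ^ (-(1/q)) * Ju ^ (1/q)) * (J1 ^ (-(1/pc)) * Jv ^ (1/pc))
        = cπ ^ e * (J1 ^ e * J1 ^ (-(1/q)) * J1 ^ (-(1/pc))) * (Ju ^ (1/q) * Jv ^ (1/pc)) := by
          ring
      _ = cπ ^ e * J1 ^ r0 * Ju ^ (1/q) * Jv ^ (1/pc) := by rw [hmerge]; ring
  have hππ : cπ ^ (-e) * cπ ^ e = 1 := by
    rw [← ENNReal.rpow_add _ _ hcπ0 hcπt]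
    simp
  constructor
  · -- forward
    calc (cπ * J1) ^ e * ((cπ * J1)⁻¹ * (cπ * Ju)) ^ (1/q) *
        ((cπ * J1)⁻¹ * (cπ * Jv)) ^ (1/pc)
        = cπ ^ e * J1 ^ r0 * Ju ^ (1/q) * Jv ^ (1/pc) := hT
      _ ≤ cπ ^ e * (c₂ * (g1 * L)) * Ju ^ (1/q) * (c₃ * g1' * JB ^ (1/pc)) := by
          exact mul_le_mul' (mul_le_mul' (mul_le_mul_right hJr_le _) le_rfl) hJv_pow
      _ = (cπ ^ e * c₂ * c₃) * (g1 * g1') * (L * Ju ^ (1/q) * JB ^ (1/pc)) := by ring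
      _ = (cπ ^ e * c₂ * c₃) * (L * Ju ^ (1/q) * JB ^ (1/pc)) := by rw [hgg, mul_one]
      _ ≤ (cπ ^ e * c₂ * c₃ + c₂ * c₃ * cπ ^ (-e)) * (L * Ju ^ (1/q) * JB ^ (1/pc)) :=
          mul_le_mul_left le_self_add _
  · -- backward
    calc L * Ju ^ (1/q) * JB ^ (1/pc)
        = (g1' * (g1 * L)) * Ju ^ (1/q) * JB ^ (1/pc) := by
          rw [show g1' * (g1 * L) = (g1 * g1') * L by ring, hgg, one_mul]
      _ ≤ (g1' * (c₂ * J1 ^ r0)) * Ju ^ (1/q) * (c₃ * g1 * Jv ^ (1/pc)) := by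
          exact mul_le_mul' (mul_le_mul' (mul_le_mul_right hgL_le _) le_rfl) hJB_pow
      _ = (c₂ * c₃) * (g1 * g1') * (J1 ^ r0 * Ju ^ (1/q) * Jv ^ (1/pc)) := by ring
      _ = (c₂ * c₃) * (cπ ^ (-e) * cπ ^ e) * (J1 ^ r0 * Ju ^ (1/q) * Jv ^ (1/pc)) := by
          rw [hgg, hππ]
      _ = (c₂ * c₃ * cπ ^ (-e)) * (cπ ^ e * J1 ^ r0 * Ju ^ (1/q) * Jv ^ (1/pc)) := by ring
      _ = (c₂ * c₃ * cπ ^ (-e)) * ((cπ * J1) ^ e * ((cπ * J1)⁻¹ * (cπ * Ju)) ^ (1/q) *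
            ((cπ * J1)⁻¹ * (cπ * Jv)) ^ (1/pc)) := by rw [hT]
      _ ≤ (cπ ^ e * c₂ * c₃ + c₂ * c₃ * cπ ^ (-e)) * ((cπ * J1) ^ e *
            ((cπ * J1)⁻¹ * (cπ * Ju)) ^ (1/q) *
            ((cπ * J1)⁻¹ * (cπ * Jv)) ^ (1/pc)) := mul_le_mul_left le_add_self _



end AIA

/-- With `u'(x) = u(x)e^{-(1-α/d)|x|²}` and `v'(x) = v(x)e^{-(1-α/d)|x|²}`, one has
`(u,v) ∈ A^a_{p,q,α}` if and only if `(u',v') ∈ 𝒜^a_{p,q,α}`. -/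
theorem A_iff_Arad (d : ℕ) (a p q α : ℝ) (ha : 0 < a)
    (hp : 1 < p) (hpq : p ≤ q) (hα : 0 ≤ α) (hαd : α < d)
    (u v : E d → ℝ≥0∞) (hu : Measurable u) (hv : Measurable v) :
    Aconst d a p q α u v < ∞ ↔
      Arad d a p q α
        (fun x => u x * ENNReal.ofReal (Real.exp (-(1 - α/d) * ‖x‖^2)))
        (fun x => v x * ENNReal.ofReal (Real.exp (-(1 - α/d) * ‖x‖^2))) < ∞ := by
  obtain ⟨C, hC, hcomp⟩ := AIA.term_comp d a p q α ha hp hpq hα hαd u v hu hv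
  simp only [Aconst, Arad]
  constructor
  · intro h
    refine lt_of_le_of_lt ?_ (ENNReal.mul_lt_top hC.lt_top h)
    refine iSup_le fun c => iSup_le fun l => iSup_le fun hcl => ?_
    refine le_trans (hcomp c l hcl).2 (mul_le_mul_right ?_ _)
    exact le_iSup_of_le c (le_iSup_of_le l (le_iSup_of_le hcl le_rfl))
  · intro h
    refine lt_of_le_of_lt ?_ (ENNReal.mul_lt_top hC.lt_top h)
    refine iSup_le fun c => iSup_le fun l => iSup_le fun hcl => ?_
    refine le_trans (hcomp c l hcl).1 (mul_le_mul_right ?_ _)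
    exact le_iSup_of_le c (le_iSup_of_le l (le_iSup_of_le hcl le_rfl))

end
end
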